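/- Let f : C × C → ℝ be pseudomonotone with f(x,x)=0, Lipschitz-type continuous with constants c₁, c₂, and f(x,·) convex and subdifferentiable. Let x* ∈ EP(f,C), x_n ∈ C, ρ > 0, y_n = argmin{ρ f(x_n,y) + ½‖x_n-y‖² : y ∈ C}, z_n = argmin{ρ f(y_n,y) + ½‖x_n-y‖² : y ∈ C}. Then ‖z_n - x*‖² ≤ ‖x_n - x*‖² - (1 - 2ρc₁)‖y_n - x_n‖² - (1 - 2ρc₂)‖y_n - z_n‖². -/

import Mathlib

open RealInnerProductSpace Filter Topology

/-- Strong-convexity improvement of the minimality condition. -/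
lemma strong_min {H : Type*} [NormedAddCommGroup H] [InnerProductSpace ℝ H]
    (C : Set H) (hCv : Convex ℝ C) (h : H → ℝ) (hconv : ConvexOn ℝ C h)
    (x m : H) (hm : m ∈ C)
    (hmin : ∀ y ∈ C, h m + ‖x - m‖ ^ 2 / 2 ≤ h y + ‖x - y‖ ^ 2 / 2) :
    ∀ y ∈ C, h m + ‖x - m‖ ^ 2 / 2 + ‖y - m‖ ^ 2 / 2 ≤ h y + ‖x - y‖ ^ 2 / 2 := by
  intro y hy
  have key : ∀ t : ℝ, t ∈ Set.Ioo (0:ℝ) 1 →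
      h m + ‖x - m‖ ^ 2 / 2 + (1 - t) * ‖y - m‖ ^ 2 / 2 ≤ h y + ‖x - y‖ ^ 2 / 2 := by
    intro t ⟨ht0, ht1⟩
    set w : H := (1 - t) • m + t • y with hw
    have hwC : w ∈ C := hCv hm hy (by linarith) ht0.le (by ring)
    have h1 : h m + ‖x - m‖ ^ 2 / 2 ≤ h w + ‖x - w‖ ^ 2 / 2 := hmin w hwC
    have h2 : h w ≤ (1 - t) * h m + t * h y :=
      hconv.2 hm hy (by linarith) ht0.le (by ring)
    have hxw : x - w = (1 - t) • (x - m) + t • (x - y) := by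
      rw [hw]; module
    have hid : ‖x - w‖ ^ 2 = (1 - t) * ‖x - m‖ ^ 2 + t * ‖x - y‖ ^ 2
        - t * (1 - t) * ‖y - m‖ ^ 2 := by
      have hym : y - m = (x - m) - (x - y) := by abel
      rw [hxw, hym]
      rw [← real_inner_self_eq_norm_sq, ← real_inner_self_eq_norm_sq,
        ← real_inner_self_eq_norm_sq, ← real_inner_self_eq_norm_sq]
      simp only [inner_add_add_self, inner_sub_sub_self, real_inner_smul_left,
        real_inner_smul_right, real_inner_comm (x - m) (x - y)]
      ring
    rw [hid] at h1
    have hkey : t * (h m + ‖x - m‖ ^ 2 / 2 + (1 - t) * ‖y - m‖ ^ 2 / 2)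
        ≤ t * (h y + ‖x - y‖ ^ 2 / 2) := by nlinarith
    exact (mul_le_mul_iff_right₀ ht0).mp hkey
  have hT : Tendsto (fun t : ℝ => h m + ‖x - m‖ ^ 2 / 2 + (1 - t) * ‖y - m‖ ^ 2 / 2)
      (𝓝[>] (0:ℝ)) (𝓝 (h m + ‖x - m‖ ^ 2 / 2 + ‖y - m‖ ^ 2 / 2)) := by
    have hc : Continuous fun t : ℝ => h m + ‖x - m‖ ^ 2 / 2 + (1 - t) * ‖y - m‖ ^ 2 / 2 := by
      continuity
    have := (hc.tendsto 0).mono_left (nhdsWithin_le_nhds (s := Set.Ioi (0:ℝ)))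
    simpa using this
  refine le_of_tendsto hT ?_
  filter_upwards [Ioo_mem_nhdsGT_of_mem (by norm_num : (0:ℝ) ∈ Set.Ico (0:ℝ) 1)] with t ht
  exact key t ht

/-- Extragradient estimate: for a pseudomonotone, Lipschitz-type continuous bifunction `f`
with `x* ∈ EP(f,C)` and extragradient iterates `y_n`, `z_n`:
`‖z_n - x*‖² ≤ ‖x_n - x*‖² - (1 - 2ρc₁)‖y_n - x_n‖² - (1 - 2ρc₂)‖y_n - z_n‖²`. -/
theorem stmt6 {H : Type*} [NormedAddCommGroup H] [InnerProductSpace ℝ H]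
    (C : Set H) (hCne : C.Nonempty) (hCc : IsClosed C) (hCv : Convex ℝ C)
    (f : H → H → ℝ) (hf0 : ∀ x ∈ C, f x x = 0)
    (hpm : ∀ x ∈ C, ∀ y ∈ C, 0 ≤ f x y → f y x ≤ 0)
    (hconv : ∀ x ∈ C, ConvexOn ℝ C (f x))
    (hsub : ∀ x ∈ C, ∀ y ∈ C, ∃ g : H, ∀ z ∈ C, f x y + ⟪g, z - y⟫ ≤ f x z)
    (c₁ c₂ : ℝ) (hc₁ : 0 < c₁) (hc₂ : 0 < c₂)
    (hlt : ∀ x ∈ C, ∀ y ∈ C, ∀ z ∈ C,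
      f x z - c₁ * ‖x - y‖ ^ 2 - c₂ * ‖y - z‖ ^ 2 ≤ f x y + f y z)
    (ρ : ℝ) (hρ : 0 < ρ)
    (xstar : H) (hxs : xstar ∈ C) (hEP : ∀ y ∈ C, 0 ≤ f xstar y)
    (xn yn zn : H) (hxn : xn ∈ C) (hyn : yn ∈ C) (hzn : zn ∈ C)
    (hymin : ∀ y ∈ C,
      ρ * f xn yn + ‖xn - yn‖ ^ 2 / 2 ≤ ρ * f xn y + ‖xn - y‖ ^ 2 / 2)
    (hzmin : ∀ y ∈ C,
      ρ * f yn zn + ‖xn - zn‖ ^ 2 / 2 ≤ ρ * f yn y + ‖xn - y‖ ^ 2 / 2) :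
    ‖zn - xstar‖ ^ 2
      ≤ ‖xn - xstar‖ ^ 2 - (1 - 2 * ρ * c₁) * ‖yn - xn‖ ^ 2
          - (1 - 2 * ρ * c₂) * ‖yn - zn‖ ^ 2 := by
  have hcx : ConvexOn ℝ C (fun y => ρ * f xn y) := (hconv xn hxn).smul hρ.le
  have hcy : ConvexOn ℝ C (fun y => ρ * f yn y) := (hconv yn hyn).smul hρ.le
  have S1 := strong_min C hCv (fun y => ρ * f xn y) hcx xn yn hyn hymin zn hzn
  have S2 := strong_min C hCv (fun y => ρ * f yn y) hcy xn zn hzn hzmin xstar hxs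
  -- f yn xstar ≤ 0 by pseudomonotonicity
  have hpm' : f yn xstar ≤ 0 := hpm xstar hxs yn hyn (hEP yn hyn)
  have hρpm : ρ * f yn xstar ≤ 0 := mul_nonpos_of_nonneg_of_nonpos hρ.le hpm'
  -- Lipschitz-type
  have hL := hlt xn hxn yn hyn zn hzn
  have hLρ : ρ * f xn zn - ρ * c₁ * ‖xn - yn‖ ^ 2 - ρ * c₂ * ‖yn - zn‖ ^ 2
      ≤ ρ * f xn yn + ρ * f yn zn := by
    have h := mul_le_mul_of_nonneg_left hL hρ.le
    ring_nf at h ⊢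
    linarith
  have e1 : ‖yn - xn‖ = ‖xn - yn‖ := norm_sub_rev _ _
  have e2 : ‖zn - yn‖ = ‖yn - zn‖ := norm_sub_rev _ _
  have e3 : ‖xstar - zn‖ = ‖zn - xstar‖ := norm_sub_rev _ _
  rw [e1]
  rw [e2] at S1
  rw [e3] at S2
  linarith
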